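/- The function h(x) = x · ln((x+1)/(x-1)) is nonincreasing on (1, ∞). -/

import Mathlib

open Real Set

/-- g(t) = 2t/(1-t²) - log((1+t)/(1-t)) has derivative 4t²/(1-t²)². -/
lemma g_hasDerivAt {t : ℝ} (h0 : (0:ℝ) ≤ t) (h1 : t < 1) :
    HasDerivAt (fun t : ℝ => 2*t/(1-t^2) - (Real.log (1+t) - Real.log (1-t)))
      (4*t^2/(1-t^2)^2) t := by
  have hne1 : (1:ℝ) + t ≠ 0 := by nlinarith
  have hne2 : (1:ℝ) - t ≠ 0 := by nlinarith
  have hne3 : (1:ℝ) - t^2 ≠ 0 := by nlinarith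
  have hd1 : HasDerivAt (fun t : ℝ => 2*t/(1-t^2))
      ((2*(1-t^2) - 2*t*(-(2*t)))/(1-t^2)^2) t := by
    have hn : HasDerivAt (fun t : ℝ => 2*t) 2 t := by
      simpa using (hasDerivAt_id t).const_mul 2
    have hden : HasDerivAt (fun t : ℝ => 1 - t^2) (-(2*t)) t := by
      simpa using ((hasDerivAt_pow 2 t).const_sub 1)
    exact hn.div hden hne3
  have hd2 : HasDerivAt (fun t : ℝ => Real.log (1+t)) (1/(1+t)) t := by
    have : HasDerivAt (fun t : ℝ => 1 + t) 1 t := by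
      simpa using (hasDerivAt_id t).const_add 1
    have e : 1/(1+t) = (1+t)⁻¹ * 1 := by ring
    rw [e]; exact (Real.hasDerivAt_log hne1).comp t this
  have hd3 : HasDerivAt (fun t : ℝ => Real.log (1-t)) (-(1/(1-t))) t := by
    have : HasDerivAt (fun t : ℝ => 1 - t) (-1) t := by
      simpa using (hasDerivAt_id t).const_sub 1
    have := (Real.hasDerivAt_log hne2).comp t this
    have e : -(1/(1-t)) = (1-t)⁻¹ * -1 := by ring
    rw [e]; exact this
  have := hd1.sub (hd2.sub hd3)
  refine this.congr_deriv ?_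
  symm
  field_simp
  ring

lemma key_t : ∀ t ∈ Ico (0:ℝ) 1,
    Real.log (1+t) - Real.log (1-t) ≤ 2*t/(1-t^2) := by
  intro t ht
  obtain ⟨h0, h1⟩ := ht
  set g := fun t : ℝ => 2*t/(1-t^2) - (Real.log (1+t) - Real.log (1-t)) with hg
  have hmono : MonotoneOn g (Ico (0:ℝ) 1) := by
    apply monotoneOn_of_deriv_nonneg (convex_Ico 0 1)
    · intro x hx
      exact (g_hasDerivAt hx.1 hx.2).continuousAt.continuousWithinAt
    · rw [interior_Ico]
      intro x hx
      exact (g_hasDerivAt hx.1.le hx.2).differentiableAt.differentiableWithinAt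
    · rw [interior_Ico]
      intro x hx
      rw [(g_hasDerivAt hx.1.le hx.2).deriv]
      positivity
  have h00 : g 0 = 0 := by simp [hg]
  have := hmono (by constructor <;> norm_num) ⟨h0, h1⟩ h0
  rw [h00] at this
  simp only [hg] at this
  linarith [this]

lemma key_x {x : ℝ} (hx : 1 < x) :
    Real.log ((x+1)/(x-1)) ≤ 2*x/(x^2-1) := by
  have hx0 : 0 < x := by linarith
  have ht : (1/x) ∈ Ico (0:ℝ) 1 := by
    constructor
    · positivity
    · rw [div_lt_one hx0]; linarith
  have h := key_t (1/x) ht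
  have hxm : x - 1 ≠ 0 := by linarith
  have hxp : x + 1 ≠ 0 := by linarith
  have e1 : Real.log (1+1/x) - Real.log (1-1/x) = Real.log ((x+1)/(x-1)) := by
    rw [← Real.log_div (by positivity) (by
      intro h'
      have : (1:ℝ) = 1/x := by linarith
      rw [eq_div_iff hx0.ne'] at this; nlinarith [this])]
    congr 1
    field_simp
  have e2 : 2*(1/x)/(1-(1/x)^2) = 2*x/(x^2-1) := by
    have hx2 : x^2 - 1 ≠ 0 := by nlinarith
    have e3 : 1-(1/x)^2 = (x^2-1)/x^2 := by field_simp
    rw [e3]; field_simp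
  rw [e1, e2] at h
  exact h

theorem h_antitone :
    AntitoneOn (fun x : ℝ => x * Real.log ((x + 1) / (x - 1))) (Set.Ioi 1) := by
  have hDeriv : ∀ x ∈ Ioi (1:ℝ),
      HasDerivAt (fun x : ℝ => x * Real.log ((x + 1) / (x - 1)))
        (Real.log ((x+1)/(x-1)) - 2*x/(x^2-1)) x := by
    intro x hx
    have hx1 : (1:ℝ) < x := hx
    have hxm' : (0:ℝ) < x - 1 := by linarith
    have hxm : x - 1 ≠ 0 := by positivity
    have hxp : (0:ℝ) < x + 1 := by linarith
    have hxp' : x + 1 ≠ 0 := by positivity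
    have hsq : x^2 - 1 ≠ 0 := by nlinarith
    have hu : HasDerivAt (fun x : ℝ => (x+1)/(x-1))
        ((1*(x-1) - (x+1)*1)/(x-1)^2) x := by
      exact ((hasDerivAt_id x).add_const 1).div ((hasDerivAt_id x).sub_const 1) hxm
    have hune : (x+1)/(x-1) ≠ 0 := by positivity
    have hlog : HasDerivAt (fun x : ℝ => Real.log ((x+1)/(x-1)))
        (((x+1)/(x-1))⁻¹ * ((1*(x-1) - (x+1)*1)/(x-1)^2)) x :=
      by have h := (Real.hasDerivAt_log hune).comp x hu; exact h
    have := (hasDerivAt_id x).mul hlog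
    refine this.congr_deriv ?_
    symm
    rw [one_mul, sub_eq_add_neg]
    congr 1
    simp only [id_eq]
    field_simp
    ring
  apply antitoneOn_of_deriv_nonpos (convex_Ioi 1)
  · intro x hx
    exact (hDeriv x hx).continuousAt.continuousWithinAt
  · rw [interior_Ioi]
    intro x hx
    exact (hDeriv x hx).differentiableAt.differentiableWithinAt
  · rw [interior_Ioi]
    intro x hx
    rw [(hDeriv x hx).deriv]
    have := key_x hx
    linarith
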